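/- Let A ⊆ ℝ be a finite set of real numbers containing 1 whose elements are linearly independent over ℚ. Define φ(t) = inf { |t + z₁ − a₁| + |t + z₂ − a₂| : a₁, a₂ ∈ A, z₁, z₂ ∈ ℤ, (z₁, a₁) ≠ (z₂, a₂) }. Then φ is continuous, periodic with period 1, strictly positive everywhere, and σ = inf { φ(t) : t ∈ ℝ } > 0. -/

import Mathlib

open Finset in
theorem stmt_4_key (A : Set ℝ) (h1 : (1 : ℝ) ∈ A)
    (hind : LinearIndependent ℚ (fun a : A => (a : ℝ))) :
    ∀ a ∈ A, ∀ b ∈ A, a ≠ b → ∀ n : ℤ, a - b ≠ (n : ℝ) := by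
  intro a ha b hb hab n h
  rw [linearIndependent_iff] at hind
  set xa : A := ⟨a, ha⟩
  set xb : A := ⟨b, hb⟩
  set x1 : A := ⟨1, h1⟩
  set l : A →₀ ℚ := Finsupp.single xa 1 - Finsupp.single xb 1 - Finsupp.single x1 (n : ℚ) with hl
  have htot : Finsupp.linearCombination ℚ (fun a : A => (a : ℝ)) l = 0 := by
    simp only [hl, map_sub, Finsupp.linearCombination_single, Rat.smul_def]
    push_cast
    norm_num
    linarith [h]
  have hl0 := hind l htot
  have hne : xa ≠ xb := fun hx => hab (congrArg Subtype.val hx)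
  by_cases ha1 : a = 1
  · -- evaluate at xb ; note xb ≠ x1 since b ≠ 1
    have hb1 : b ≠ 1 := fun hb1 => hab (ha1.trans hb1.symm)
    have h2 : xb ≠ x1 := fun hx => hb1 (congrArg Subtype.val hx)
    have := DFunLike.congr_fun hl0 xb
    rw [hl] at this
    rw [Finsupp.sub_apply, Finsupp.sub_apply, Finsupp.single_eq_of_ne' hne,
      Finsupp.single_eq_same, Finsupp.single_eq_of_ne' h2.symm] at this
    norm_num at this
  · have h2 : x1 ≠ xa := fun hx => ha1 ((congrArg Subtype.val hx)).symm
    have := DFunLike.congr_fun hl0 xa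
    rw [hl] at this
    rw [Finsupp.sub_apply, Finsupp.sub_apply, Finsupp.single_eq_same,
      Finsupp.single_eq_of_ne' hne.symm, Finsupp.single_eq_of_ne' h2] at this
    norm_num at this

theorem stmt_4 (A : Set ℝ) (hfin : A.Finite) (h1 : (1 : ℝ) ∈ A)
    (hind : LinearIndependent ℚ (fun a : A => (a : ℝ)))
    (φ : ℝ → ℝ)
    (hφ : ∀ t : ℝ, φ t = sInf {v : ℝ | ∃ a₁ ∈ A, ∃ a₂ ∈ A, ∃ z₁ z₂ : ℤ,
      (z₁, a₁) ≠ (z₂, a₂) ∧ v = |t + z₁ - a₁| + |t + z₂ - a₂|}) :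
    Continuous φ ∧ (∀ t : ℝ, φ (t + 1) = φ t) ∧ (∀ t : ℝ, 0 < φ t) ∧
      0 < sInf {v : ℝ | ∃ t : ℝ, v = φ t} := by
  classical
  set S : ℝ → Set ℝ := fun t => {v : ℝ | ∃ a₁ ∈ A, ∃ a₂ ∈ A, ∃ z₁ z₂ : ℤ,
      (z₁, a₁) ≠ (z₂, a₂) ∧ v = |t + z₁ - a₁| + |t + z₂ - a₂|} with hS
  have key := stmt_4_key A h1 hind
  -- the finite set of candidate lower bounds
  set s : Finset ℝ := hfin.toFinset with hsdef
  set T : Finset ℝ := insert (1 : ℝ)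
    (((s ×ˢ s).filter fun p => p.1 ≠ p.2).image
      fun p => |p.1 - p.2 - (round (p.1 - p.2) : ℤ)|) with hT
  have hTne : T.Nonempty := ⟨1, Finset.mem_insert_self _ _⟩
  set c : ℝ := T.min' hTne with hc
  have hcpos : 0 < c := by
    rw [hc, Finset.lt_min'_iff]
    intro y hy
    rw [hT, Finset.mem_insert] at hy
    rcases hy with rfl | hy
    · norm_num
    · rcases Finset.mem_image.1 hy with ⟨p, hp, rfl⟩
      rcases Finset.mem_filter.1 hp with ⟨hps, hpne⟩
      rcases Finset.mem_product.1 hps with ⟨hp1, hp2⟩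
      have h1A : p.1 ∈ A := hfin.mem_toFinset.1 hp1
      have h2A : p.2 ∈ A := hfin.mem_toFinset.1 hp2
      have := key p.1 h1A p.2 h2A hpne (round (p.1 - p.2))
      have : p.1 - p.2 - (round (p.1 - p.2) : ℝ) ≠ 0 := fun hz => this (by linarith)
      exact abs_pos.2 this
  -- lower bound for all elements of S t
  have hlow : ∀ t : ℝ, ∀ v ∈ S t, c ≤ v := by
    intro t v hv
    rcases hv with ⟨a₁, ha₁, a₂, ha₂, z₁, z₂, hne, rfl⟩
    set x₁ : ℝ := t + z₁ - a₁
    set x₂ : ℝ := t + z₂ - a₂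
    have habs : |x₁ - x₂| ≤ |x₁| + |x₂| := abs_sub _ _
    by_cases haa : a₁ = a₂
    · have hz : z₁ ≠ z₂ := fun hz => hne (by rw [hz, haa])
      have h1 : (1 : ℝ) ≤ |x₁ - x₂| := by
        have : x₁ - x₂ = ((z₁ - z₂ : ℤ) : ℝ) := by simp only [x₁, x₂, haa]; push_cast; ring
        rw [this]
        rw [← Int.cast_abs]
        exact_mod_cast Int.one_le_abs (sub_ne_zero.2 hz)
      have hc1 : c ≤ 1 := Finset.min'_le _ _ (Finset.mem_insert_self _ _)
      linarith
    · have hmem : |a₁ - a₂ - (round (a₁ - a₂) : ℤ)| ∈ T := by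
        rw [hT]
        refine Finset.mem_insert_of_mem (Finset.mem_image.2 ⟨(a₁, a₂), ?_, rfl⟩)
        exact Finset.mem_filter.2 ⟨Finset.mem_product.2
          ⟨hfin.mem_toFinset.2 ha₁, hfin.mem_toFinset.2 ha₂⟩, haa⟩
      have hcle : c ≤ |a₁ - a₂ - (round (a₁ - a₂) : ℤ)| := Finset.min'_le _ _ hmem
      have hround : |a₁ - a₂ - (round (a₁ - a₂) : ℤ)| ≤ |x₁ - x₂| := by
        have hx : x₁ - x₂ = -((a₁ - a₂) - ((z₁ - z₂ : ℤ) : ℝ)) := by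
          simp [x₁, x₂]; push_cast; ring
        rw [hx, abs_neg]
        exact round_le (a₁ - a₂) (z₁ - z₂)
      linarith
  have hSne : ∀ t : ℝ, (S t).Nonempty := by
    intro t
    refine ⟨|t + (0 : ℤ) - 1| + |t + (1 : ℤ) - 1|, 1, h1, 1, h1, 0, 1, ?_, rfl⟩
    simp
  have hφlow : ∀ t : ℝ, c ≤ φ t := by
    intro t
    rw [hφ t]
    exact le_csInf (hSne t) (hlow t)
  have hbdd : ∀ t : ℝ, BddBelow (S t) := fun t => ⟨c, hlow t⟩
  -- Lipschitz estimate
  have hlip : ∀ s t : ℝ, φ s ≤ φ t + 2 * |s - t| := by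
    intro u t
    rw [hφ t]
    have : φ u - 2 * |u - t| ≤ sInf (S t) := by
      apply le_csInf (hSne t)
      rintro v ⟨a₁, ha₁, a₂, ha₂, z₁, z₂, hne, rfl⟩
      have hmemu : |u + z₁ - a₁| + |u + z₂ - a₂| ∈ S u :=
        ⟨a₁, ha₁, a₂, ha₂, z₁, z₂, hne, rfl⟩
      have h1 : φ u ≤ |u + z₁ - a₁| + |u + z₂ - a₂| := by
        rw [hφ u]; exact csInf_le (hbdd u) hmemu
      have e1 : |u + z₁ - a₁| ≤ |t + z₁ - a₁| + |u - t| := by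
        have : u + z₁ - a₁ = (t + z₁ - a₁) + (u - t) := by ring
        rw [this]; exact abs_add_le _ _
      have e2 : |u + z₂ - a₂| ≤ |t + z₂ - a₂| + |u - t| := by
        have : u + z₂ - a₂ = (t + z₂ - a₂) + (u - t) := by ring
        rw [this]; exact abs_add_le _ _
      linarith
    linarith
  have hcont : Continuous φ := by
    have : LipschitzWith 2 φ := by
      apply LipschitzWith.of_dist_le_mul
      intro x y
      have hcast : ((2 : NNReal) : ℝ) = 2 := by norm_num
      rw [Real.dist_eq, Real.dist_eq, hcast, abs_le]
      have h1 := hlip x y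
      have h2 := hlip y x
      rw [abs_sub_comm y x] at h2
      constructor <;> linarith
    exact this.continuous
  refine ⟨hcont, ?_, fun t => lt_of_lt_of_le hcpos (hφlow t), ?_⟩
  · intro t
    have hset : S (t + 1) = S t := by
      ext v
      constructor
      · rintro ⟨a₁, ha₁, a₂, ha₂, z₁, z₂, hne, rfl⟩
        refine ⟨a₁, ha₁, a₂, ha₂, z₁ + 1, z₂ + 1, ?_, ?_⟩
        · intro hx
          apply hne
          rw [Prod.mk.injEq] at hx ⊢
          exact ⟨by omega, hx.2⟩
        · push_cast; ring_nf
      · rintro ⟨a₁, ha₁, a₂, ha₂, z₁, z₂, hne, rfl⟩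
        refine ⟨a₁, ha₁, a₂, ha₂, z₁ - 1, z₂ - 1, ?_, ?_⟩
        · intro hx
          apply hne
          rw [Prod.mk.injEq] at hx ⊢
          exact ⟨by omega, hx.2⟩
        · push_cast; ring_nf
    rw [hφ (t + 1), hφ t]
    exact congrArg sInf hset
  · have hne2 : {v : ℝ | ∃ t : ℝ, v = φ t}.Nonempty := ⟨φ 0, 0, rfl⟩
    have : c ≤ sInf {v : ℝ | ∃ t : ℝ, v = φ t} := by
      apply le_csInf hne2
      rintro v ⟨t, rfl⟩
      exact hφlow t
    linarith
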